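/- Let f = (1/3, 1/3, 1/3, 1/3, 1/3, 1/3) ∈ ℚ^6, let N ⊆ ℚ^6 be the subgroup generated by the standard basis vectors e_1, …, e_6 and f, and let P ⊆ ℝ^6 be the convex hull of {e_1, …, e_6, e_1 − f, …, e_6 − f}. Then P is reflexive with respect to N: 0 lies in the interior of P, all vertices of P lie in N, and the polar P° = {y ∈ ℝ^6 : ⟨x, y⟩ ≤ 1 for all x ∈ P} is the convex hull of a finite subset of the dual lattice M = {u ∈ ℚ^6 : ⟨u, v⟩ ∈ ℤ for all v ∈ N}. -/

import Mathlib

open Pointwise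

/-- The 8 candidate vertices of the polar polytope, as rational vectors:
`(1,…,1)`, `(-1,…,-1)`, and the six vectors with `-5` in one slot and `1` elsewhere. -/
private def gQ' : Fin 2 ⊕ Fin 6 → Fin 6 → ℚ :=
  Sum.elim (fun b _ => if b = 0 then 1 else -1) (fun j i => if i = j then -5 else 1)

/-- The same 8 vectors, over `ℝ`. -/
private noncomputable def gR' : Fin 2 ⊕ Fin 6 → Fin 6 → ℝ :=
  Sum.elim (fun b _ => if b = 0 then 1 else -1) (fun j i => if i = j then -5 else 1)

/-- The 12 vertices of `P`, over `ℝ`: `(j, false) ↦ eⱼ`, `(j, true) ↦ eⱼ - f`. -/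
private noncomputable def vR' : Fin 6 × Bool → Fin 6 → ℝ := fun p i =>
  if p.2 then (if i = p.1 then 1 else 0) - 1 / 3 else (if i = p.1 then 1 else 0)

private lemma cast_gQ' : ∀ k i, ((gQ' k i : ℚ) : ℝ) = gR' k i := by
  rintro (b | j) i <;> simp [gQ', gR', apply_ite (fun q : ℚ => (q : ℝ))]

private lemma memB' (y : Fin 6 → ℝ) (h1 : ∀ j, y j ≤ 1)
    (h2 : ∀ j, y j ≤ 1 + (∑ i, y i) / 3) :
    y ∈ convexHull ℝ (Set.range gR') := by
  set s : ℝ := ∑ i, y i with hs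
  set c : ℝ := min 1 (1 + s / 3) with hc
  have hc1 : c ≤ 1 := min_le_left _ _
  have hc2 : c ≤ 1 + s / 3 := min_le_right _ _
  have hcy : ∀ j, y j ≤ c := fun j => le_min (h1 j) (h2 j)
  have hsx : s = y 0 + y 1 + y 2 + y 3 + y 4 + y 5 := by rw [hs, Fin.sum_univ_six]
  set w : Fin 2 ⊕ Fin 6 → ℝ :=
    Sum.elim (fun b => if b = 0 then (1 + s / 3 - c) / 2 else (1 - c) / 2)
      (fun j => (c - y j) / 6) with hw
  have hw0 : ∀ k ∈ Finset.univ, 0 ≤ w k := by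
    rintro (b | j) _
    · rcases eq_or_ne b 0 with h | h <;> simp [hw, h] <;> linarith
    · simp [hw]; linarith [hcy j]
  have hws : ∑ k, w k = 1 := by
    simp only [hw, Fintype.sum_sum_type, Fin.sum_univ_two, Fin.sum_univ_six, Sum.elim_inl,
      Sum.elim_inr]
    norm_num
    rw [hsx]; ring
  have hmem := Finset.centerMass_mem_convexHull (Finset.univ) hw0 (by rw [hws]; norm_num)
    (fun k _ => Set.mem_range_self (f := gR') k)
  rwa [Finset.centerMass_eq_of_sum_1 _ _ hws, show ∑ k, w k • gR' k = y from ?_] at hmem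
  funext i
  rw [Finset.sum_apply]
  simp only [hw, gR', Fintype.sum_sum_type, Fin.sum_univ_two, Fin.sum_univ_six, Sum.elim_inl,
    Sum.elim_inr, Pi.smul_apply, smul_eq_mul]
  fin_cases i <;> simp (config := { decide := true }) [Fin.ext_iff] <;> (rw [hsx]; ring)

private lemma memA' (x : Fin 6 → ℝ) (hs1 : ∑ i, x i ≤ 1) (hs2 : -1 ≤ ∑ i, x i)
    (hj : ∀ j, (∑ i, x i) - 6 * x j ≤ 1) :
    x ∈ convexHull ℝ (Set.range vR') := by
  set σ : ℝ := ∑ i, x i with hσ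
  have hσx : σ = x 0 + x 1 + x 2 + x 3 + x 4 + x 5 := by rw [hσ, Fin.sum_univ_six]
  set w : Fin 6 × Bool → ℝ := fun p =>
    (if p.2 then (1 - σ) / 2 else (1 + σ) / 2) * (x p.1 + (1 - σ) / 6) with hw
  have hm : ∀ j, 0 ≤ x j + (1 - σ) / 6 := fun j => by linarith [hj j]
  have hw0 : ∀ k ∈ Finset.univ, 0 ≤ w k := by
    rintro ⟨j, b⟩ _
    cases b <;> simp only [hw, Bool.false_eq_true, if_false, if_true, ite_false, ite_true] <;>
      exact mul_nonneg (by linarith) (hm j)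
  have hws : ∑ k, w k = 1 := by
    simp only [hw, Fintype.sum_prod_type, Fintype.sum_bool, Fin.sum_univ_six,
      Bool.false_eq_true, if_false, if_true, ite_false, ite_true]
    rw [hσx]; ring
  have hmem := Finset.centerMass_mem_convexHull (Finset.univ) hw0 (by rw [hws]; norm_num)
    (fun k _ => Set.mem_range_self (f := vR') k)
  rwa [Finset.centerMass_eq_of_sum_1 _ _ hws, show ∑ k, w k • vR' k = x from ?_] at hmem
  funext i
  rw [Finset.sum_apply]
  simp only [hw, vR', Fintype.sum_prod_type, Fintype.sum_bool, Fin.sum_univ_six,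
    Pi.smul_apply, smul_eq_mul]
  fin_cases i <;> simp (config := { decide := true }) [Fin.ext_iff] <;> (rw [hσx]; ring)

theorem stmt_8 (f : Fin 6 → ℚ) (hf : f = fun _ => 1 / 3)
    (N : AddSubgroup (Fin 6 → ℚ))
    (hN : N = AddSubgroup.closure
      (Set.range (fun j : Fin 6 => Pi.single j (1 : ℚ)) ∪ {f}))
    (V : Set (Fin 6 → ℚ))
    (hV : V = Set.range (fun j : Fin 6 => Pi.single j (1 : ℚ)) ∪
      Set.range (fun j : Fin 6 => Pi.single j (1 : ℚ) - f))
    (P : Set (Fin 6 → ℝ))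
    (hP : P = convexHull ℝ ((fun q : Fin 6 → ℚ => fun i => (q i : ℝ)) '' V)) :
    (0 : Fin 6 → ℝ) ∈ interior P ∧
    V ⊆ (N : Set (Fin 6 → ℚ)) ∧
    ∃ T : Finset (Fin 6 → ℚ),
      (∀ u ∈ T, ∀ w ∈ N, ∃ n : ℤ, ∑ i, u i * w i = (n : ℚ)) ∧
      {y : Fin 6 → ℝ | ∀ x ∈ P, ∑ i, x i * y i ≤ 1} =
        convexHull ℝ ((fun q : Fin 6 → ℚ => fun i => (q i : ℝ)) '' (T : Set (Fin 6 → ℚ))) := by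
  classical
  -- the 12 vertices of P are the real images of V
  have hVsub : Set.range vR' ⊆ (fun q : Fin 6 → ℚ => fun i => (q i : ℝ)) '' V := by
    rintro _ ⟨⟨j, b⟩, rfl⟩
    cases b
    · refine ⟨Pi.single j 1, by rw [hV]; exact Or.inl ⟨j, rfl⟩, ?_⟩
      funext i
      simp [vR', Pi.single_apply, apply_ite (fun q : ℚ => (q : ℝ))]
    · refine ⟨Pi.single j 1 - f, by rw [hV]; exact Or.inr ⟨j, rfl⟩, ?_⟩
      funext i
      simp [vR', hf, Pi.single_apply, apply_ite (fun q : ℚ => (q : ℝ))]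
  refine ⟨?_, ?_, ?_⟩
  · -- 0 ∈ interior P
    have hcont : Continuous (fun x : Fin 6 → ℝ => ∑ i, x i) :=
      continuous_finset_sum _ (fun i _ => continuous_apply i)
    set U : Set (Fin 6 → ℝ) :=
      ({x | ∑ i, x i < 1} ∩ {x | -1 < ∑ i, x i}) ∩
        (⋂ j : Fin 6, {x | (∑ i, x i) - 6 * x j < 1}) with hU
    have hUopen : IsOpen U := by
      refine (((isOpen_lt hcont continuous_const).inter
        (isOpen_lt continuous_const hcont)).inter (isOpen_iInter_of_finite fun j => ?_))
      exact isOpen_lt (hcont.sub (continuous_const.mul (continuous_apply j))) continuous_const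
    have h0U : (0 : Fin 6 → ℝ) ∈ U := by
      simp [hU, Set.mem_iInter]
    have hUP : U ⊆ P := by
      rintro x ⟨⟨hx1, hx2⟩, hx3⟩
      have hx3' : ∀ j, (∑ i, x i) - 6 * x j < 1 := by
        intro j; exact Set.mem_iInter.mp hx3 j
      have := memA' x (le_of_lt hx1) (le_of_lt hx2) (fun j => le_of_lt (hx3' j))
      rw [hP]
      exact convexHull_mono hVsub this
    exact mem_interior.mpr ⟨U, hUP, hUopen, h0U⟩
  · -- V ⊆ N
    rw [hV, hN]
    rintro q (⟨j, rfl⟩ | ⟨j, rfl⟩)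
    · exact AddSubgroup.subset_closure (Or.inl ⟨j, rfl⟩)
    · exact sub_mem (AddSubgroup.subset_closure (Or.inl ⟨j, rfl⟩))
        (AddSubgroup.subset_closure (Or.inr rfl))
  · -- the polar of P
    refine ⟨Finset.image gQ' Finset.univ, ?_, ?_⟩
    · -- T ⊆ dual lattice M
      intro u hu w hw
      obtain ⟨k, -, rfl⟩ := Finset.mem_image.mp hu
      have hint : ∀ j, ∃ n : ℤ, gQ' k j = (n : ℚ) := by
        intro j
        rcases k with b | i
        · exact ⟨if b = 0 then 1 else -1, by rcases eq_or_ne b 0 with h | h <;> simp [gQ', h]⟩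
        · exact ⟨if j = i then -5 else 1, by rcases eq_or_ne j i with h | h <;> simp [gQ', h]⟩
      have hsum : ∃ m : ℤ, ∑ i, gQ' k i = 3 * (m : ℚ) := by
        rcases k with b | j
        · rcases eq_or_ne b 0 with h | h
          · exact ⟨2, by simp [gQ', h, Fin.sum_univ_six]; norm_num⟩
          · exact ⟨-2, by simp [gQ', h, Fin.sum_univ_six]; norm_num⟩
        · refine ⟨0, ?_⟩
          fin_cases j <;>
            simp (config := { decide := true }) [gQ', Fin.sum_univ_six] <;>
            norm_num
      set φ : (Fin 6 → ℚ) →+ ℚ :=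
        { toFun := fun w => ∑ i, gQ' k i * w i
          map_zero' := by simp
          map_add' := fun a b => by simp [mul_add, Finset.sum_add_distrib] } with hφ
      have hle : N ≤ AddSubgroup.comap φ (AddSubgroup.zmultiples (1 : ℚ)) := by
        rw [hN, AddSubgroup.closure_le]
        rintro q (⟨j, rfl⟩ | hq)
        · obtain ⟨n, hn⟩ := hint j
          refine AddSubgroup.mem_comap.mpr (AddSubgroup.mem_zmultiples_iff.mpr ⟨n, ?_⟩)
          have : φ (Pi.single j 1) = gQ' k j := by
            simp [hφ, Pi.single_apply, mul_ite, Finset.sum_ite_eq']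
          rw [this, hn]; simp [zsmul_eq_mul]
        · obtain ⟨m, hm⟩ := hsum
          have hqf : q = f := hq
          refine AddSubgroup.mem_comap.mpr (AddSubgroup.mem_zmultiples_iff.mpr ⟨m, ?_⟩)
          have hφq : φ q = (∑ i, gQ' k i) / 3 := by
            show (∑ i, gQ' k i * q i) = _
            rw [hqf, hf]
            have hterm : ∀ i : Fin 6, gQ' k i * ((fun _ : Fin 6 => (1:ℚ)/3) i)
                = gQ' k i / 3 := fun i => by ring
            rw [Finset.sum_congr rfl fun i _ => hterm i]
            exact (Finset.sum_div _ _ _).symm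
          rw [hφq, hm]
          simp [zsmul_eq_mul]
          try ring
      have := hle hw
      rw [AddSubgroup.mem_comap, AddSubgroup.mem_zmultiples_iff] at this
      obtain ⟨n, hn⟩ := this
      exact ⟨n, by simpa [zsmul_eq_mul, hφ] using hn.symm⟩
    · -- polar P = convexHull (image T)
      have hTset : (fun q : Fin 6 → ℚ => fun i => (q i : ℝ)) ''
          ((Finset.image gQ' Finset.univ : Finset (Fin 6 → ℚ)) : Set (Fin 6 → ℚ)) =
          Set.range gR' := by
        rw [Finset.coe_image, Finset.coe_univ, Set.image_univ, ← Set.range_comp]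
        exact congrArg Set.range (funext fun k => funext fun i => cast_gQ' k i)
      rw [hTset]
      -- linearity helpers
      have hlin1 : ∀ q : Fin 6 → ℚ, IsLinearMap ℝ (fun z : Fin 6 → ℝ => ∑ i, (q i : ℝ) * z i) := by
        intro q
        constructor
        · intro a b; simp [mul_add, Finset.sum_add_distrib]
        · intro c a; simp [Finset.mul_sum, smul_eq_mul]; exact Finset.sum_congr rfl fun i _ => by ring
      have hlin2 : ∀ y : Fin 6 → ℝ, IsLinearMap ℝ (fun z : Fin 6 → ℝ => ∑ i, z i * y i) := by
        intro y
        constructor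
        · intro a b; simp [add_mul, Finset.sum_add_distrib]
        · intro c a; simp [Finset.mul_sum, smul_eq_mul]; exact Finset.sum_congr rfl fun i _ => by ring
      -- symbolic evaluation of the pairings with the vertices of P
      have hsingleR : ∀ (j : Fin 6) (z : Fin 6 → ℝ),
          ∑ i, ((Pi.single j 1 : Fin 6 → ℚ) i : ℝ) * z i = z j := by
        intro j z
        have hterm : ∀ i, ((Pi.single j 1 : Fin 6 → ℚ) i : ℝ) * z i
            = if i = j then z i else 0 := by
          intro i; rcases eq_or_ne i j with h | h <;> simp [Pi.single_apply, h]
        rw [Finset.sum_congr rfl (fun i _ => hterm i), Finset.sum_ite_eq' Finset.univ j z]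
        simp
      have hsubR : ∀ (j : Fin 6) (z : Fin 6 → ℝ),
          ∑ i, ((Pi.single j 1 - f : Fin 6 → ℚ) i : ℝ) * z i = z j - (∑ i, z i) / 3 := by
        intro j z
        have hterm : ∀ i, ((Pi.single j 1 - f : Fin 6 → ℚ) i : ℝ) * z i
            = ((Pi.single j 1 : Fin 6 → ℚ) i : ℝ) * z i - (1/3) * z i := by
          intro i
          rw [hf]
          push_cast [Pi.sub_apply]
          ring
        rw [Finset.sum_congr rfl (fun i _ => hterm i), Finset.sum_sub_distrib, hsingleR,
          ← Finset.mul_sum]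
        ring
      have hrow0 : ∀ i' : Fin 6, ∑ i, gR' (Sum.inr i') i = 0 := by
        intro i'
        fin_cases i' <;>
          simp (config := { decide := true }) [gR', Fin.sum_univ_six] <;>
          norm_num
      have hent : ∀ k j, gR' k j ≤ 1 := by
        rintro (b | i') j
        · rcases eq_or_ne b 0 with h | h <;> simp [gR', h] <;> norm_num
        · rcases eq_or_ne j i' with h | h <;> simp [gR', h] <;> norm_num
      -- the vertex-pair inequalities
      have key : ∀ q ∈ V, ∀ k, (∑ i, (q i : ℝ) * gR' k i) ≤ 1 := by
        rw [hV]
        rintro q (⟨j, rfl⟩ | ⟨j, rfl⟩) k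
        · rw [hsingleR]; exact hent k j
        · rw [hsubR]
          rcases k with b | i'
          · rcases eq_or_ne b 0 with h | h <;>
              simp [gR', h, Fin.sum_univ_six] <;> norm_num
          · rw [hrow0 i']
            simpa using hent (Sum.inr i') j
      ext y
      simp only [Set.mem_setOf_eq]
      constructor
      · -- polar ⊆ conv T
        intro hy
        have hmemP : ∀ q ∈ V, (fun i => ((q i : ℚ) : ℝ)) ∈ P := by
          intro q hq
          rw [hP]
          exact subset_convexHull ℝ _ ⟨q, hq, rfl⟩
        have h1 : ∀ j, y j ≤ 1 := by
          intro j
          have := hy _ (hmemP (Pi.single j 1) (by rw [hV]; exact Or.inl ⟨j, rfl⟩))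
          rwa [hsingleR] at this
        have h2 : ∀ j, y j ≤ 1 + (∑ i, y i) / 3 := by
          intro j
          have := hy _ (hmemP (Pi.single j 1 - f) (by rw [hV]; exact Or.inr ⟨j, rfl⟩))
          rw [hsubR] at this
          linarith
        exact memB' y h1 h2
      · -- conv T ⊆ polar
        intro hy x hx
        rw [hP] at hx
        have hsub : (fun q : Fin 6 → ℚ => fun i => (q i : ℝ)) '' V ⊆
            {z : Fin 6 → ℝ | ∑ i, z i * y i ≤ 1} := by
          rintro _ ⟨q, hq, rfl⟩
          show ∑ i, (q i : ℝ) * y i ≤ 1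
          have hrange : Set.range gR' ⊆ {z : Fin 6 → ℝ | ∑ i, (q i : ℝ) * z i ≤ 1} := by
            rintro _ ⟨k, rfl⟩
            exact key q hq k
          exact convexHull_min hrange (convex_halfSpace_le (hlin1 q) 1) hy
        exact convexHull_min hsub (convex_halfSpace_le (hlin2 y) 1) hx
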